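/- Let (E,𝒫) be a random locally convex module over K with base (Ω,𝓕,P) such that E has the countable concatenation property. Then: (1) if G ⊆ E has the countable concatenation property, then the closure of G in the (ε,λ)-topology also has the countable concatenation property; (2) if G ⊆ E is L⁰-convex (ξx+(1−ξ)y ∈ G for all x,y ∈ G and ξ ∈ L⁰₊(𝓕) with 0 ≤ ξ ≤ 1), then the (ε,λ)-closure of G equals the (ε,λ)-closure of its countable concatenation hull H_cc(G), and this common closure has the countable concatenation property. -/

import Mathlib

open MeasureTheory Filter Classical

/-- `⋁{‖x‖ : ‖·‖ ∈ Q}` for a finite subfamily `Q` of a family of `L⁰`-seminorms, evaluated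
pointwise (the seminorms being a.e. nonnegative, truncating negative values is harmless, and
the supremum over the empty family is `0`). -/
noncomputable def finSup {ι : Type*} (Q : Finset ι) (g : ι → ℝ) : ℝ :=
  ((Q.sup fun i => Real.toNNReal (g i) : NNReal) : ℝ)

/-- `Ĩ_A`, the equivalence class in `L⁰(𝓕,K)` of the indicator function of a measurable set
`A` (junk value `0` if `A` is not measurable). -/
noncomputable def indK (K : Type*) [RCLike K] {Ω : Type*} [MeasurableSpace Ω] (P : Measure Ω)
    (A : Set Ω) : Ω →ₘ[P] K :=
  if h : MeasurableSet A then
    AEEqFun.mk (A.indicator fun _ => (1 : K))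
      ((stronglyMeasurable_const.indicator h).aestronglyMeasurable)
  else 0

/-- The canonical embedding `L⁰(𝓕,ℝ) → L⁰(𝓕,K)`. -/
noncomputable def toK (K : Type*) [RCLike K] {Ω : Type*} [MeasurableSpace Ω] {P : Measure Ω}
    (ξ : Ω →ₘ[P] ℝ) : Ω →ₘ[P] K :=
  ξ.comp RCLike.ofReal RCLike.continuous_ofReal

/-- A subset `G` of an `L⁰(𝓕,K)`-module has the countable concatenation property if every
sequence in `G` can be concatenated along every countable measurable partition of `Ω` within
`G`. -/
def ccp (K : Type*) [RCLike K] {Ω : Type*} [MeasurableSpace Ω] (P : Measure Ω)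
    {E : Type*} [SMul (Ω →ₘ[P] K) E] (G : Set E) : Prop :=
  ∀ u : ℕ → E, (∀ n, u n ∈ G) → ∀ A : ℕ → Set Ω, (∀ n, MeasurableSet (A n)) →
    Pairwise (Function.onFun Disjoint A) → (⋃ n, A n) = Set.univ →
    ∃ x ∈ G, ∀ n, indK K P (A n) • x = indK K P (A n) • u n

/-- `H_cc(G)`, the countable concatenation hull of `G`. -/
def Hcc (K : Type*) [RCLike K] {Ω : Type*} [MeasurableSpace Ω] (P : Measure Ω)
    {E : Type*} [SMul (Ω →ₘ[P] K) E] (G : Set E) : Set E :=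
  {x | ∃ (u : ℕ → E) (A : ℕ → Set Ω), (∀ n, u n ∈ G) ∧ (∀ n, MeasurableSet (A n)) ∧
    Pairwise (Function.onFun Disjoint A) ∧ (⋃ n, A n) = Set.univ ∧
    ∀ n, indK K P (A n) • x = indK K P (A n) • u n}

/-- The closure of a subset `G` of a random locally convex module in the `(ε,λ)`-topology
induced by the family of `L⁰`-seminorms `p`. -/
def elCl {Ω : Type*} [MeasurableSpace Ω] (P : Measure Ω) {ι E : Type*} [AddCommGroup E]
    (p : ι → E → Ω →ₘ[P] ℝ) (G : Set E) : Set E :=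
  {x | ∀ (Q : Finset ι) (ε lam : ℝ), 0 < ε → 0 < lam → lam < 1 →
    ∃ g ∈ G, ENNReal.ofReal (1 - lam) < P {ω | finSup Q (fun i => p i (x - g) ω) < ε}}

section AuxLemmas

variable {Ω : Type*} [MeasurableSpace Ω] {P : Measure Ω} {K : Type*} [RCLike K]

lemma indK_coe {A : Set Ω} (hA : MeasurableSet A) :
    ⇑(indK K P A) =ᵐ[P] A.indicator fun _ => (1 : K) := by
  rw [indK, dif_pos hA]
  exact AEEqFun.coeFn_mk _ _

lemma indK_univ : indK K P Set.univ = 1 := by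
  refine AEEqFun.ext ?_
  filter_upwards [indK_coe (K := K) (P := P) MeasurableSet.univ,
    AEEqFun.coeFn_one (α := Ω) (μ := P) (β := K)] with ω h1 h2
  rw [h1, h2]; simp

lemma indK_empty : indK K P ∅ = 0 := by
  refine AEEqFun.ext ?_
  filter_upwards [indK_coe (K := K) (P := P) MeasurableSet.empty,
    AEEqFun.coeFn_zero (α := Ω) (μ := P) (β := K)] with ω h1 h2
  rw [h1, h2]; simp

lemma indK_mul {A B : Set Ω} (hA : MeasurableSet A) (hB : MeasurableSet B) :
    indK K P A * indK K P B = indK K P (A ∩ B) := by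
  refine AEEqFun.ext ?_
  filter_upwards [AEEqFun.coeFn_mul (indK K P A) (indK K P B), indK_coe (K := K) hA,
    indK_coe (K := K) hB, indK_coe (K := K) (hA.inter hB)] with ω hm h1 h2 h3
  rw [hm, Pi.mul_apply, h1, h2, h3]
  by_cases hωA : ω ∈ A <;> by_cases hωB : ω ∈ B <;>
    simp [Set.indicator, hωA, hωB]

lemma toK_coe (ξ : Ω →ₘ[P] ℝ) :
    ⇑(toK K ξ) =ᵐ[P] fun ω => ((ξ ω : ℝ) : K) := by
  rw [toK]
  exact AEEqFun.coeFn_comp _ RCLike.continuous_ofReal ξ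

lemma finSup_lt_iff {ι : Type*} {Q : Finset ι} {g : ι → ℝ} {ε : ℝ} (hε : 0 < ε) :
    finSup Q g < ε ↔ ∀ i ∈ Q, g i < ε := by
  unfold finSup
  constructor
  · intro h i hi
    refine lt_of_le_of_lt ?_ h
    calc g i ≤ ((g i).toNNReal : ℝ) := Real.le_coe_toNNReal _
      _ ≤ _ := NNReal.coe_le_coe.mpr (Finset.le_sup (f := fun i => (g i).toNNReal) hi)
  · intro h
    have hlt : (Q.sup fun i => (g i).toNNReal) < ε.toNNReal := by
      refine (Finset.sup_lt_iff ?_).mpr fun i hi =>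
        (Real.toNNReal_lt_toNNReal_iff hε).mpr (h i hi)
      simpa using Real.toNNReal_pos.mpr hε
    calc ((Q.sup fun i => (g i).toNNReal : NNReal) : ℝ) < (ε.toNNReal : ℝ) :=
        NNReal.coe_lt_coe.mpr hlt
      _ = ε := Real.coe_toNNReal _ hε.le

end AuxLemmas

/-- Let `(E,𝒫)` be a random locally convex module over `K` with base
`(Ω,𝓕,P)` such that `E` has the countable concatenation property.  Then (1) the
`(ε,λ)`-closure of any subset with the countable concatenation property again has this
property, and (2) for any `L⁰`-convex `G ⊆ E`, the `(ε,λ)`-closure of `G` equals the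
`(ε,λ)`-closure of `H_cc(G)` and has the countable concatenation property. -/
theorem stmt7
    {Ω K ι E : Type*} [MeasurableSpace Ω] {P : Measure Ω} [IsProbabilityMeasure P]
    [RCLike K] [AddCommGroup E] [SMul (Ω →ₘ[P] K) E]
    -- `E` is a left module over `L⁰(𝓕,K)`
    (hmoda : ∀ (ξ : Ω →ₘ[P] K) (x y : E), ξ • (x + y) = ξ • x + ξ • y)
    (hmodb : ∀ (ξ η : Ω →ₘ[P] K) (x : E), (ξ + η) • x = ξ • x + η • x)
    (hmodc : ∀ (ξ η : Ω →ₘ[P] K) (x : E), (ξ * η) • x = ξ • (η • x))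
    (hmodd : ∀ x : E, (1 : Ω →ₘ[P] K) • x = x)
    -- countable concatenations in `E` are uniquely determined
    (hdet : ∀ (x y : E) (A : ℕ → Set Ω), (∀ n, MeasurableSet (A n)) →
      Pairwise (Function.onFun Disjoint A) → (⋃ n, A n) = Set.univ →
      (∀ n, indK K P (A n) • x = indK K P (A n) • y) → x = y)
    -- `𝒫 = {p i : i ∈ ι}` is a separating family of `L⁰`-seminorms on `E`
    (p : ι → E → Ω →ₘ[P] ℝ)
    (hp_pos : ∀ i x, ∀ᵐ ω ∂P, 0 ≤ p i x ω)
    (hp_tri : ∀ i x y, ∀ᵐ ω ∂P, p i (x + y) ω ≤ p i x ω + p i y ω)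
    (hp_hom : ∀ i (ξ : Ω →ₘ[P] K) (x : E), ∀ᵐ ω ∂P, p i (ξ • x) ω = ‖ξ ω‖ * p i x ω)
    (hp_sep : ∀ x : E, (∀ i, ∀ᵐ ω ∂P, p i x ω = 0) → x = 0)
    -- `E` itself has the countable concatenation property
    (hE : ccp K P (Set.univ : Set E)) :
    -- (1)
    (∀ G : Set E, ccp K P G → ccp K P (elCl P p G)) ∧
    -- (2)
    (∀ G : Set E,
      (∀ x ∈ G, ∀ y ∈ G, ∀ ξ : Ω →ₘ[P] ℝ, (∀ᵐ ω ∂P, 0 ≤ ξ ω ∧ ξ ω ≤ 1) →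
        toK K ξ • x + toK K (1 - ξ) • y ∈ G) →
      elCl P p G = elCl P p (Hcc K P G) ∧ ccp K P (elCl P p G)) := by
  classical
  -- derived module facts
  have zero_smul' : ∀ x : E, (0 : Ω →ₘ[P] K) • x = 0 := by
    intro x
    have h : (0 : Ω →ₘ[P] K) • x + 0 = (0 : Ω →ₘ[P] K) • x + (0 : Ω →ₘ[P] K) • x := by
      rw [add_zero]
      simpa using hmodb 0 0 x
    exact (add_left_cancel h).symm
  have smul_sub' : ∀ (ξ : Ω →ₘ[P] K) (x y : E), ξ • (x - y) = ξ • x - ξ • y := by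
    intro ξ x y
    have h := hmoda ξ (x - y) y
    rw [sub_add_cancel] at h
    rw [eq_sub_iff_add_eq]
    exact h.symm
  -- seminorms agree a.e. on a set where the indicator multiples agree
  have pe : ∀ (i : ι) {A : Set Ω}, MeasurableSet A → ∀ {z w : E},
      indK K P A • z = indK K P A • w → ∀ᵐ ω ∂P, ω ∈ A → p i z ω = p i w ω := by
    intro i A hA z w h
    filter_upwards [hp_hom i (indK K P A) z, hp_hom i (indK K P A) w, indK_coe (K := K) hA]
      with ω e1 e2 ec hω
    rw [h] at e1
    rw [e2] at e1
    have hn : ‖(indK K P A) ω‖ = 1 := by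
      rw [ec, Set.indicator_of_mem hω, norm_one]
    rw [hn, one_mul, one_mul] at e1
    exact e1.symm
  -- measurability of sublevel sets
  have sub_set : ∀ (Q : Finset ι) (ε : ℝ), 0 < ε → ∀ z : E,
      {ω | finSup Q (fun i => p i z ω) < ε} = ⋂ i ∈ Q, {ω | p i z ω < ε} := by
    intro Q ε hε z
    ext ω
    simp only [Set.mem_setOf_eq, Set.mem_iInter, finSup_lt_iff hε]
  have sub_meas : ∀ (Q : Finset ι) (ε : ℝ), 0 < ε → ∀ z : E,
      MeasurableSet {ω | finSup Q (fun i => p i z ω) < ε} := by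
    intro Q ε hε z
    rw [sub_set Q ε hε z]
    exact MeasurableSet.biInter Q.countable_toSet fun i _ =>
      measurableSet_lt (p i z).measurable measurable_const
  -- Part (1)
  have part1 : ∀ G : Set E, ccp K P G → ccp K P (elCl P p G) := by
    intro G hG u hu A hAm hAd hAU
    obtain ⟨x, -, hx⟩ := hE u (fun n => Set.mem_univ _) A hAm hAd hAU
    refine ⟨x, ?_, hx⟩
    intro Q ε lam hε hl0 hl1
    have hlam : ∀ n : ℕ, 0 < lam / 2 / 2 / 2 ^ n ∧ lam / 2 / 2 / 2 ^ n < 1 := by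
      intro n
      constructor
      · positivity
      · have h1 : (1 : ℝ) ≤ 2 ^ n := one_le_pow₀ one_le_two
        have h2 : lam / 2 / 2 / 2 ^ n ≤ lam / 2 / 2 / 1 := by
          apply div_le_div_of_nonneg_left _ one_pos h1
          positivity
        have : lam / 2 / 2 / 1 < 1 := by linarith
        linarith
    have hchoice : ∀ n : ℕ, ∃ g ∈ G, ENNReal.ofReal (1 - lam / 2 / 2 / 2 ^ n) <
        P {ω | finSup Q (fun i => p i (u n - g) ω) < ε} :=
      fun n => hu n Q ε _ hε (hlam n).1 (hlam n).2
    choose gs hgsG hgsP using hchoice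
    obtain ⟨g, hgG, hgc⟩ := hG gs hgsG A hAm hAd hAU
    refine ⟨g, hgG, ?_⟩
    set T := {ω | finSup Q (fun i => p i (x - g) ω) < ε} with hTdef
    have hTm : MeasurableSet T := sub_meas Q ε hε (x - g)
    have hind : ∀ n, indK K P (A n) • (x - g) = indK K P (A n) • (u n - gs n) := by
      intro n
      rw [smul_sub', smul_sub', hx n, hgc n]
    have haen : ∀ n, ∀ᵐ ω ∂P, ∀ i ∈ Q, ω ∈ A n → p i (x - g) ω = p i (u n - gs n) ω :=
      fun n => (ae_ball_iff Q.countable_toSet).mpr fun i _ => pe i (hAm n) (hind n)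
    have hsub : ∀ n, P (A n ∩ Tᶜ) ≤ ENNReal.ofReal (lam / 2 / 2 / 2 ^ n) := by
      intro n
      have h1 : P (A n ∩ Tᶜ) ≤ P {ω | finSup Q (fun i => p i (u n - gs n) ω) < ε}ᶜ := by
        apply measure_mono_ae
        filter_upwards [haen n] with ω hω
        intro hmem
        obtain ⟨hA, hT⟩ := hmem
        rw [hTdef] at hT
        simp only [Set.mem_compl_iff, Set.mem_setOf_eq, not_lt] at hT
        show ω ∈ {ω | finSup Q (fun i => p i (u n - gs n) ω) < ε}ᶜ
        simp only [Set.mem_compl_iff, Set.mem_setOf_eq, not_lt]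
        have hequ : finSup Q (fun i => p i (u n - gs n) ω) =
            finSup Q (fun i => p i (x - g) ω) := by
          unfold finSup
          congr 1
          apply Finset.sup_congr rfl
          intro i hi
          exact congrArg Real.toNNReal (hω i hi hA).symm
        rw [hequ]
        exact hT
      have h2 : P {ω | finSup Q (fun i => p i (u n - gs n) ω) < ε}ᶜ =
          1 - P {ω | finSup Q (fun i => p i (u n - gs n) ω) < ε} :=
        prob_compl_eq_one_sub (sub_meas Q ε hε (u n - gs n))
      have h3 : (1 : ENNReal) - P {ω | finSup Q (fun i => p i (u n - gs n) ω) < ε} ≤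
          1 - ENNReal.ofReal (1 - lam / 2 / 2 / 2 ^ n) :=
        tsub_le_tsub_left (hgsP n).le _
      have h4 : (1 : ENNReal) - ENNReal.ofReal (1 - lam / 2 / 2 / 2 ^ n) =
          ENNReal.ofReal (lam / 2 / 2 / 2 ^ n) := by
        rw [← ENNReal.ofReal_one, ← ENNReal.ofReal_sub _ (by linarith [(hlam n).2])]
        congr 1
        ring
      exact h1.trans (h2.le.trans (h3.trans h4.le))
    have hTc : P Tᶜ ≤ ENNReal.ofReal (lam / 2) := by
      have hcov : Tᶜ = ⋃ n, A n ∩ Tᶜ := by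
        rw [← Set.iUnion_inter, hAU, Set.univ_inter]
      calc P Tᶜ = P (⋃ n, A n ∩ Tᶜ) := by rw [← hcov]
        _ ≤ ∑' n, P (A n ∩ Tᶜ) := measure_iUnion_le _
        _ ≤ ∑' n, ENNReal.ofReal (lam / 2 / 2 / 2 ^ n) := ENNReal.tsum_le_tsum hsub
        _ = ENNReal.ofReal (lam / 2) := by
            rw [← ENNReal.ofReal_tsum_of_nonneg (fun n => by positivity)
              (summable_geometric_two' (lam / 2)), tsum_geometric_two' (lam / 2)]
    have hlast : ENNReal.ofReal (1 - lam) + P Tᶜ < P T + P Tᶜ := by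
      calc ENNReal.ofReal (1 - lam) + P Tᶜ
          ≤ ENNReal.ofReal (1 - lam) + ENNReal.ofReal (lam / 2) := add_le_add_right hTc _
        _ = ENNReal.ofReal (1 - lam / 2) := by
            rw [← ENNReal.ofReal_add (by linarith) (by positivity)]
            congr 1
            ring
        _ < 1 := by
            rw [← ENNReal.ofReal_one]
            exact (ENNReal.ofReal_lt_ofReal_iff one_pos).mpr (by linarith)
        _ = P T + P Tᶜ := by rw [measure_add_measure_compl hTm, measure_univ]
    exact (ENNReal.add_lt_add_iff_right (measure_ne_top P _)).mp hlast
  -- `Hcc G` always has ccp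
  have hccHcc : ∀ G : Set E, ccp K P (Hcc K P G) := by
    intro G u hu B hBm hBd hBU
    choose g A hgG hAm hAd hAU hind using hu
    obtain ⟨x, -, hx⟩ := hE u (fun _ => Set.mem_univ _) B hBm hBd hBU
    refine ⟨x, ?_, hx⟩
    let e : ℕ ≃ ℕ × ℕ := Nat.pairEquiv.symm
    refine ⟨fun k => g (e k).1 (e k).2, fun k => B (e k).1 ∩ A (e k).1 (e k).2,
      fun k => hgG _ _, fun k => (hBm _).inter (hAm _ _), ?_, ?_, ?_⟩
    · intro k k' hkk'
      have he : e k ≠ e k' := fun h => hkk' (e.injective h)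
      by_cases h1 : (e k).1 = (e k').1
      · have h2 : (e k).2 ≠ (e k').2 := fun h2 => he (Prod.ext h1 h2)
        have hd := hAd (e k).1 h2
        show Disjoint (B (e k).1 ∩ A (e k).1 (e k).2) (B (e k').1 ∩ A (e k').1 (e k').2)
        rw [← h1]
        exact Disjoint.mono Set.inter_subset_right Set.inter_subset_right hd
      · exact Disjoint.mono Set.inter_subset_left Set.inter_subset_left (hBd h1)
    · apply Set.eq_univ_of_forall
      intro ω
      have hω1 : ω ∈ ⋃ n, B n := by rw [hBU]; trivial
      obtain ⟨n, hn⟩ := Set.mem_iUnion.mp hω1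
      have hω2 : ω ∈ ⋃ m, A n m := by rw [hAU n]; trivial
      obtain ⟨m, hm⟩ := Set.mem_iUnion.mp hω2
      refine Set.mem_iUnion.mpr ⟨e.symm (n, m), ?_⟩
      show ω ∈ B (e (e.symm (n, m))).1 ∩ A (e (e.symm (n, m))).1 (e (e.symm (n, m))).2
      rw [Equiv.apply_symm_apply]
      exact ⟨hn, hm⟩
    · intro k
      show indK K P (B (e k).1 ∩ A (e k).1 (e k).2) • x
          = indK K P (B (e k).1 ∩ A (e k).1 (e k).2) • g (e k).1 (e k).2
      set n := (e k).1
      set m := (e k).2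
      rw [← indK_mul (hBm n) (hAm n m)]
      calc (indK K P (B n) * indK K P (A n m)) • x
          = indK K P (A n m) • (indK K P (B n) • x) := by rw [mul_comm]; exact hmodc _ _ _
        _ = indK K P (A n m) • (indK K P (B n) • u n) := by rw [hx n]
        _ = indK K P (B n) • (indK K P (A n m) • u n) := by
            rw [← hmodc, mul_comm, hmodc]
        _ = indK K P (B n) • (indK K P (A n m) • g n m) := by rw [hind n m]
        _ = (indK K P (B n) * indK K P (A n m)) • g n m := (hmodc _ _ _).symm
  refine ⟨part1, fun G hconv => ?_⟩
  -- G ⊆ Hcc G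
  have hGsub : G ⊆ Hcc K P G := by
    intro x hxG
    refine ⟨fun _ => x, fun n => if n = 0 then Set.univ else ∅, fun _ => hxG,
      fun n => by by_cases h : n = 0 <;> simp [h], ?_, ?_, fun n => rfl⟩
    · intro a b hab
      by_cases ha : a = 0
      · have hb : b ≠ 0 := by rw [ha] at hab; exact fun h => hab h.symm
        show Disjoint (if a = 0 then Set.univ else ∅) (if b = 0 then Set.univ else ∅)
        simp [ha, hb]
      · show Disjoint (if a = 0 then Set.univ else ∅) (if b = 0 then Set.univ else ∅)
        simp [ha]
    · apply Set.eq_univ_of_forall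
      intro ω
      exact Set.mem_iUnion.mpr ⟨0, by simp⟩
  have hmono : elCl P p G ⊆ elCl P p (Hcc K P G) := by
    intro x hxc Q ε lam h1 h2 h3
    obtain ⟨g, hg, hP⟩ := hxc Q ε lam h1 h2 h3
    exact ⟨g, hGsub hg, hP⟩
  have hrev : elCl P p (Hcc K P G) ⊆ elCl P p G := by
    intro x hxc Q ε lam hε hl0 hl1
    obtain ⟨y, hy, hPy⟩ := hxc Q ε (lam / 2) hε (by positivity) (by linarith)
    obtain ⟨g, A, hgG, hAm, hAd, hAU, hyA⟩ := hy
    -- finite prefixes of the concatenation stay in G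
    have key : ∀ N : ℕ, ∃ z ∈ G, ∀ k < N, indK K P (A k) • z = indK K P (A k) • g k := by
      intro N
      induction N with
      | zero => exact ⟨g 0, hgG 0, fun k hk => absurd hk (Nat.not_lt_zero k)⟩
      | succ N ih =>
        obtain ⟨z, hz, hzk⟩ := ih
        set ξ : Ω →ₘ[P] ℝ := AEEqFun.mk ((A N).indicator fun _ => (1 : ℝ))
          ((stronglyMeasurable_const.indicator (hAm N)).aestronglyMeasurable) with hξdef
        have hξc : ⇑ξ =ᵐ[P] (A N).indicator fun _ => (1 : ℝ) := AEEqFun.coeFn_mk _ _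
        have h01 : ∀ᵐ ω ∂P, 0 ≤ ξ ω ∧ ξ ω ≤ 1 := by
          filter_upwards [hξc] with ω h
          rw [h]
          by_cases hω : ω ∈ A N <;> simp [Set.indicator, hω]
        have htk : toK K ξ = indK K P (A N) := by
          refine AEEqFun.ext ?_
          filter_upwards [toK_coe (K := K) ξ, hξc, indK_coe (K := K) (hAm N)]
            with ω h1 h2 h3
          rw [h1, h2, h3]
          by_cases hω : ω ∈ A N <;> simp [Set.indicator, hω]
        have htk' : toK K (1 - ξ) = indK K P (A N)ᶜ := by
          refine AEEqFun.ext ?_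
          filter_upwards [toK_coe (K := K) (1 - ξ), AEEqFun.coeFn_sub (1 : Ω →ₘ[P] ℝ) ξ,
            AEEqFun.coeFn_one (α := Ω) (μ := P) (β := ℝ), hξc,
            indK_coe (K := K) (hAm N).compl] with ω h1 h2 h3 h4 h5
          rw [h1]
          have hv : (1 - ξ) ω = 1 - ξ ω := by rw [h2, Pi.sub_apply, h3]; rfl
          rw [hv, h4, h5]
          by_cases hω : ω ∈ A N <;> simp [Set.indicator, hω]
        have hzmem : toK K ξ • g N + toK K (1 - ξ) • z ∈ G := hconv (g N) (hgG N) z hz ξ h01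
        refine ⟨_, hzmem, ?_⟩
        intro k hk
        rw [htk, htk', hmoda, ← hmodc, ← hmodc, indK_mul (hAm k) (hAm N),
          indK_mul (hAm k) (hAm N).compl]
        rcases Nat.lt_succ_iff_lt_or_eq.mp hk with hkN | hkN
        · have h1 : A k ∩ A N = ∅ := Set.disjoint_iff_inter_eq_empty.mp (hAd hkN.ne)
          have h2 : A k ∩ (A N)ᶜ = A k := by
            apply Set.inter_eq_self_of_subset_left
            intro ω hω hωN
            exact (hAd hkN.ne).le_bot ⟨hω, hωN⟩
          rw [h1, h2, indK_empty, zero_smul', zero_add]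
          exact hzk k hkN
        · subst hkN
          rw [Set.inter_self, Set.inter_compl_self, indK_empty, zero_smul', add_zero]
    -- choose a finite part of the partition with large measure
    have hsum : ∑' n, P (A n) = 1 := by
      rw [← measure_iUnion hAd hAm, hAU, measure_univ]
    have hex : ∃ F : Finset ℕ, ENNReal.ofReal (1 - lam / 2) < ∑ k ∈ F, P (A k) := by
      by_contra hcon
      push_neg at hcon
      have h1 : ∑' n, P (A n) ≤ ENNReal.ofReal (1 - lam / 2) := by
        rw [ENNReal.tsum_eq_iSup_sum]
        exact iSup_le hcon
      rw [hsum] at h1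
      have h2 : ENNReal.ofReal (1 - lam / 2) < 1 := by
        rw [← ENNReal.ofReal_one]
        exact (ENNReal.ofReal_lt_ofReal_iff one_pos).mpr (by linarith)
      exact absurd (lt_of_le_of_lt h1 h2) (lt_irrefl _)
    obtain ⟨F, hF⟩ := hex
    obtain ⟨N, hFN⟩ := F.exists_nat_subset_range
    set B := ⋃ k ∈ Finset.range N, A k with hBdef
    have hBmeas : MeasurableSet B :=
      MeasurableSet.biUnion (Finset.range N).countable_toSet fun k _ => hAm k
    have hPB : ENNReal.ofReal (1 - lam / 2) < P B := by
      refine lt_of_lt_of_le hF ?_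
      rw [← measure_biUnion_finset (fun i _ j _ hij => hAd hij) (fun k _ => hAm k)]
      exact measure_mono (Set.biUnion_subset_biUnion_left (Finset.coe_subset.mpr hFN))
    obtain ⟨z, hzG, hzk⟩ := key N
    refine ⟨z, hzG, ?_⟩
    set S := {ω | finSup Q (fun i => p i (x - y) ω) < ε} with hSdef
    set T := {ω | finSup Q (fun i => p i (x - z) ω) < ε} with hTdef
    have hSm : MeasurableSet S := sub_meas Q ε hε (x - y)
    have hindk : ∀ k, k < N → indK K P (A k) • (x - z) = indK K P (A k) • (x - y) := by
      intro k hk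
      rw [smul_sub', smul_sub', hzk k hk, hyA k]
    have haek : ∀ᵐ ω ∂P, ∀ k, k < N → ∀ i ∈ Q, ω ∈ A k →
        p i (x - z) ω = p i (x - y) ω := by
      rw [ae_all_iff]
      intro k
      by_cases hk : k < N
      · filter_upwards [(ae_ball_iff Q.countable_toSet).mpr
          (fun i _ => pe i (hAm k) (hindk k hk))] with ω hω
        exact fun _ i hi hA => hω i hi hA
      · exact Filter.Eventually.of_forall fun ω h => absurd h hk
    have hST : P (S ∩ B) ≤ P T := by
      apply measure_mono_ae
      filter_upwards [haek] with ω hω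
      intro hmem
      obtain ⟨hS, hB⟩ := hmem
      simp only [hBdef, Finset.mem_range, Set.mem_iUnion] at hB
      obtain ⟨k, hkN, hkA⟩ := hB
      simp only [hTdef, hSdef, Set.mem_setOf_eq, finSup_lt_iff hε] at hS ⊢
      intro i hi
      rw [hω k hkN i hi hkA]
      exact hS i hi
    have harith : ENNReal.ofReal (1 - lam) + P (S ∪ B) < P (S ∩ B) + P (S ∪ B) := by
      have h1 : ENNReal.ofReal (1 - lam) + P (S ∪ B) ≤ ENNReal.ofReal (1 - lam) + 1 :=
        add_le_add_right prob_le_one _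
      have h2 : ENNReal.ofReal (1 - lam) + 1 =
          ENNReal.ofReal (1 - lam / 2) + ENNReal.ofReal (1 - lam / 2) := by
        rw [← ENNReal.ofReal_one, ← ENNReal.ofReal_add (by linarith) (by linarith),
          ← ENNReal.ofReal_add (by linarith) (by linarith)]
        congr 1
        ring
      have h3 : ENNReal.ofReal (1 - lam / 2) + ENNReal.ofReal (1 - lam / 2) < P S + P B :=
        ENNReal.add_lt_add hPy hPB
      have h4 : P S + P B = P (S ∩ B) + P (S ∪ B) := by
        rw [add_comm (P (S ∩ B)), measure_union_add_inter S hBmeas]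
      calc ENNReal.ofReal (1 - lam) + P (S ∪ B) ≤ ENNReal.ofReal (1 - lam) + 1 := h1
        _ = ENNReal.ofReal (1 - lam / 2) + ENNReal.ofReal (1 - lam / 2) := h2
        _ < P S + P B := h3
        _ = P (S ∩ B) + P (S ∪ B) := h4
    have hfin : ENNReal.ofReal (1 - lam) < P (S ∩ B) :=
      (ENNReal.add_lt_add_iff_right (measure_ne_top P _)).mp harith
    exact lt_of_lt_of_le hfin hST
  have heq : elCl P p G = elCl P p (Hcc K P G) := Set.Subset.antisymm hmono hrev
  refine ⟨heq, ?_⟩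
  rw [heq]
  exact part1 (Hcc K P G) (hccHcc G)
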